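/- For any two finite simple graphs G and H, the 3-token graph of their disjoint union G ⊕ H is isomorphic to the disjoint union Γ₃(G) ⊕ Γ₃(H) ⊕ (Γ₂(G) □ H) ⊕ (Γ₂(H) □ G), where □ denotes the Cartesian product of graphs. -/

import Mathlib

open SimpleGraph Finset

/-- The `k`-token graph of a graph `G`: vertices are `k`-element subsets of the vertex set,
two subsets adjacent iff their symmetric difference is `{x, y}` with `xy` an edge of `G`. -/
def tokenGraph {V : Type*} [DecidableEq V] (G : SimpleGraph V) (k : ℕ) :
    SimpleGraph {s : Finset V // s.card = k} where
  Adj A B := ∃ x y, G.Adj x y ∧ symmDiff A.1 B.1 = {x, y}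
  symm := by
    refine ⟨?_⟩
    rintro A B ⟨x, y, hxy, h⟩
    exact ⟨x, y, hxy, by rwa [symmDiff_comm]⟩
  loopless := by
    refine ⟨?_⟩
    rintro A ⟨x, y, hxy, h⟩
    rw [symmDiff_self] at h
    exact (Finset.insert_nonempty x {y}).ne_empty (by simpa using h.symm)

/-- Vertex set of the cubical staircase graph `CS n` (1-indexed coordinates). -/
abbrev CSVert (n : ℕ) :=
  {v : ℕ × ℕ × ℕ // 1 ≤ v.1 ∧ v.1 ≤ n - 2 ∧ 1 ≤ v.2.1 ∧ v.2.1 ≤ v.1 ∧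
    1 ≤ v.2.2 ∧ v.2.2 ≤ n - 1 - v.1}

/-- The cubical staircase graph `CS n`: two vertices are adjacent iff they differ in exactly
one coordinate, by exactly 1. -/
def CS (n : ℕ) : SimpleGraph (CSVert n) where
  Adj a b :=
    (a.1.1 = b.1.1 ∧ a.1.2.1 = b.1.2.1 ∧ (a.1.2.2 + 1 = b.1.2.2 ∨ b.1.2.2 + 1 = a.1.2.2)) ∨
    (a.1.1 = b.1.1 ∧ a.1.2.2 = b.1.2.2 ∧ (a.1.2.1 + 1 = b.1.2.1 ∨ b.1.2.1 + 1 = a.1.2.1)) ∨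
    (a.1.2.1 = b.1.2.1 ∧ a.1.2.2 = b.1.2.2 ∧ (a.1.1 + 1 = b.1.1 ∨ b.1.1 + 1 = a.1.1))
  symm := ⟨fun a b h => by omega⟩
  loopless := ⟨fun a h => by omega⟩

/-- Disjoint union of an arbitrary family of graphs. -/
def sigmaGraph {ι : Type*} {V : ι → Type*} (G : ∀ i, SimpleGraph (V i)) :
    SimpleGraph (Σ i, V i) where
  Adj a b := ∃ (i : ι) (x y : V i), (G i).Adj x y ∧ a = ⟨i, x⟩ ∧ b = ⟨i, y⟩
  symm := by refine ⟨?_⟩; rintro a b ⟨i, x, y, h, rfl, rfl⟩; exact ⟨i, y, x, h.symm, rfl, rfl⟩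
  loopless := by
    refine ⟨?_⟩
    rintro a ⟨i, x, y, h, rfl, he⟩
    exact h.ne (by simpa using he)

open Sum

lemma tokenGraph_adj {V : Type*} [DecidableEq V] (G : SimpleGraph V) (k : ℕ)
    (A B : {s : Finset V // s.card = k}) :
    (tokenGraph G k).Adj A B ↔ ∃ x y, G.Adj x y ∧ symmDiff A.1 B.1 = {x, y} := Iff.rfl

lemma empty_eq_insert_iff {V : Type*} [DecidableEq V] (a : V) (s : Finset V) :
    ((∅ : Finset V) = insert a s) ↔ False :=
  ⟨fun h => Finset.insert_ne_empty a s h.symm, False.elim⟩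

lemma empty_eq_singleton_iff {V : Type*} (a : V) :
    ((∅ : Finset V) = {a}) ↔ False :=
  ⟨fun h => Finset.singleton_ne_empty a h.symm, False.elim⟩

section helpers
variable {α β : Type*} [DecidableEq α] [DecidableEq β]

lemma toLeft_symmDiff (s t : Finset (α ⊕ β)) :
    (symmDiff s t).toLeft = symmDiff s.toLeft t.toLeft := by
  ext x; simp [Finset.mem_symmDiff]

lemma toRight_symmDiff (s t : Finset (α ⊕ β)) :
    (symmDiff s t).toRight = symmDiff s.toRight t.toRight := by
  ext x; simp [Finset.mem_symmDiff]

omit [DecidableEq α] [DecidableEq β] in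
lemma finsetSum_ext {s t : Finset (α ⊕ β)} (h1 : s.toLeft = t.toLeft)
    (h2 : s.toRight = t.toRight) : s = t := by
  rw [← Finset.toLeft_disjSum_toRight (u := s), h1, h2, Finset.toLeft_disjSum_toRight]

lemma pair_adj {H : SimpleGraph β} {b b' : β} :
    (∃ x y, H.Adj x y ∧ symmDiff ({b} : Finset β) {b'} = {x, y}) ↔ H.Adj b b' := by
  constructor
  · rintro ⟨x, y, hxy, h⟩
    have hbb : b ≠ b' := by
      rintro rfl
      rw [symmDiff_self] at h
      have : x ∈ (⊥ : Finset β) := h ▸ Finset.mem_insert_self x {y}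
      simp at this
    have hpair : ({b, b'} : Finset β) = {x, y} := by
      rw [← h]; ext a; simp [Finset.mem_symmDiff]; aesop
    have hb : b = x ∨ b = y := by
      have := hpair ▸ Finset.mem_insert_self b {b'}; simpa using this
    have hb' : b' = x ∨ b' = y := by
      have : b' ∈ ({b, b'} : Finset β) := by simp
      rw [hpair] at this; simpa using this
    rcases hb with rfl | rfl <;> rcases hb' with rfl | rfl
    · exact absurd rfl hbb
    · exact hxy
    · exact hxy.symm
    · exact absurd rfl hbb
  · intro h
    refine ⟨b, b', h, ?_⟩
    ext a; simp [Finset.mem_symmDiff]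
    have := h.ne; aesop

lemma adj_char (G : SimpleGraph α) (H : SimpleGraph β) (s t : Finset (α ⊕ β)) :
    (∃ x y, (G ⊕g H).Adj x y ∧ symmDiff s t = {x, y}) ↔
      ((s.toRight = t.toRight ∧ ∃ x y, G.Adj x y ∧ symmDiff s.toLeft t.toLeft = {x, y}) ∨
       (s.toLeft = t.toLeft ∧ ∃ x y, H.Adj x y ∧ symmDiff s.toRight t.toRight = {x, y})) := by
  constructor
  · rintro ⟨x, y, hxy, h⟩
    match x, y with
    | inl x, inl y =>
      left
      refine ⟨symmDiff_eq_bot.mp ?_, x, y, by simpa using hxy, ?_⟩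
      · rw [← toRight_symmDiff, h]; ext a; simp
      · rw [← toLeft_symmDiff, h]; ext a; simp
    | inr x, inr y =>
      right
      refine ⟨symmDiff_eq_bot.mp ?_, x, y, by simpa using hxy, ?_⟩
      · rw [← toLeft_symmDiff, h]; ext a; simp
      · rw [← toRight_symmDiff, h]; ext a; simp
    | inl x, inr y => simp at hxy
    | inr x, inl y => simp at hxy
  · rintro (⟨hR, x, y, hxy, hL⟩ | ⟨hL, x, y, hxy, hR⟩)
    · refine ⟨inl x, inl y, by simpa using hxy, finsetSum_ext ?_ ?_⟩
      · rw [toLeft_symmDiff, hL]; ext a; simp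
      · rw [toRight_symmDiff, hR, symmDiff_self]; ext a; simp
    · refine ⟨inr x, inr y, by simpa using hxy, finsetSum_ext ?_ ?_⟩
      · rw [toLeft_symmDiff, hL, symmDiff_self]; ext a; simp
      · rw [toRight_symmDiff, hR]; ext a; simp

def gmap (α β : Type*) [DecidableEq α] [DecidableEq β] :
    ((({s : Finset α // s.card = 3} ⊕ {s : Finset β // s.card = 3}) ⊕
      ({s : Finset α // s.card = 2} × β)) ⊕ ({s : Finset β // s.card = 2} × α)) →
    {s : Finset (α ⊕ β) // s.card = 3}
  | Sum.inl (Sum.inl (Sum.inl A)) => ⟨A.1.disjSum ∅, by simp [A.2]⟩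
  | Sum.inl (Sum.inl (Sum.inr B)) => ⟨Finset.disjSum ∅ B.1, by simp [B.2]⟩
  | Sum.inl (Sum.inr (A, b)) => ⟨A.1.disjSum {b}, by simp [A.2]⟩
  | Sum.inr (B, a) => ⟨({a} : Finset α).disjSum B.1, by simp [B.2]⟩

lemma gmap_inj : Function.Injective (gmap α β) := by
  rintro (((⟨A, hA⟩ | ⟨B, hB⟩) | ⟨⟨A, hA⟩, b⟩) | ⟨⟨B, hB⟩, a⟩)
    (((⟨A', hA'⟩ | ⟨B', hB'⟩) | ⟨⟨A', hA'⟩, b'⟩) | ⟨⟨B', hB'⟩, a'⟩) h <;>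
    simp_all [gmap, -Finset.disjSum_empty, -Finset.empty_disjSum] <;>
    (try obtain ⟨h1, h2⟩ := h) <;> subst_vars <;> simp_all

lemma gmap_surj : Function.Surjective (gmap α β) := by
  rintro ⟨s, hs⟩
  have hsum := Finset.card_toLeft_add_card_toRight (u := s)
  rw [hs] at hsum
  have hle : s.toLeft.card ≤ 3 := by omega
  interval_cases h : s.toLeft.card
  · refine ⟨Sum.inl (Sum.inl (Sum.inr ⟨s.toRight, by omega⟩)), ?_⟩
    simp only [gmap, Subtype.mk.injEq]
    rw [← Finset.card_eq_zero.mp h, Finset.toLeft_disjSum_toRight]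
  · obtain ⟨a, ha⟩ := Finset.card_eq_one.mp h
    refine ⟨Sum.inr (⟨s.toRight, by omega⟩, a), ?_⟩
    simp only [gmap, Subtype.mk.injEq]
    rw [← ha, Finset.toLeft_disjSum_toRight]
  · obtain ⟨b, hb⟩ := Finset.card_eq_one.mp (show s.toRight.card = 1 by omega)
    refine ⟨Sum.inl (Sum.inr (⟨s.toLeft, h⟩, b)), ?_⟩
    simp only [gmap, Subtype.mk.injEq]
    rw [← hb, Finset.toLeft_disjSum_toRight]
  · refine ⟨Sum.inl (Sum.inl (Sum.inl ⟨s.toLeft, h⟩)), ?_⟩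
    simp only [gmap, Subtype.mk.injEq]
    rw [← Finset.card_eq_zero.mp (show s.toRight.card = 0 by omega),
      Finset.toLeft_disjSum_toRight]

end helpers

theorem stmt0 {α β : Type*} [Fintype α] [Fintype β] [DecidableEq α] [DecidableEq β]
    (G : SimpleGraph α) (H : SimpleGraph β) :
    Nonempty (tokenGraph (G ⊕g H) 3 ≃g
      (tokenGraph G 3 ⊕g tokenGraph H 3 ⊕g (tokenGraph G 2 □ H) ⊕g (tokenGraph H 2 □ G))) := by
  refine ⟨RelIso.symm ((⟨Equiv.ofBijective (gmap α β) (show Function.Bijective (gmap α β) from ⟨gmap_inj, gmap_surj⟩), ?_⟩ :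
    (tokenGraph G 3 ⊕g tokenGraph H 3 ⊕g (tokenGraph G 2 □ H) ⊕g (tokenGraph H 2 □ G)) ≃g
      tokenGraph (G ⊕g H) 3))⟩
  intro u v
  revert u v
  rintro (((⟨A, hA⟩ | ⟨B, hB⟩) | ⟨⟨A, hA⟩, b⟩) | ⟨⟨B, hB⟩, a⟩)
    (((⟨A', hA'⟩ | ⟨B', hB'⟩) | ⟨⟨A', hA'⟩, b'⟩) | ⟨⟨B', hB'⟩, a'⟩) <;>
  · simp only [Equiv.ofBijective_apply, tokenGraph_adj]
    rw [adj_char]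
    simp only [gmap, Finset.toLeft_disjSum, Finset.toRight_disjSum]
    simp [tokenGraph, pair_adj, boxProd_adj, Finset.singleton_inj, symmDiff_self,
      empty_eq_insert_iff, empty_eq_singleton_iff]
    try (rintro (⟨h, -⟩ | ⟨h, -⟩) <;> apply_fun Finset.card at h <;> simp_all)
    try aesop
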